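/- If u is a bispecial f-smooth word over {a,b}, then both P_{f,a}(u) and P_{f,b}(u) are bispecial f-smooth words with the same multiplicity as u. -/

import Mathlib

namespace SmoothWords

/-- Complement of a letter over the alphabet `{a, b}`. -/
def flip (a b c : ℕ) : ℕ := if c = a then b else a

/-- Run-length encoding of a finite word: list of (letter, exponent) pairs. -/
def runs : List ℕ → List (ℕ × ℕ)
  | [] => []
  | c :: t =>
    match runs t with
    | [] => [(c, 1)]
    | (d, k) :: r => if c = d then (c, k + 1) :: r else (c, 1) :: (d, k) :: r

/-- The exponents of the canonical run-length factorization. -/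
def exps (u : List ℕ) : List ℕ := (runs u).map Prod.snd

/-- Boundary cut used by the finite derivatives. -/
def cut (a b p : ℕ) : List ℕ := if p ≤ a then [] else [b]

/-- The finite derivative `D_f`. -/
def Df (a b : ℕ) (u : List ℕ) : List ℕ :=
  match exps u with
  | [] => []
  | [p] => cut a b p
  | p :: q :: rest =>
      cut a b p ++ (q :: rest).dropLast ++ cut a b ((q :: rest).getLast (List.cons_ne_nil _ _))

/-- `u` is f-derivable: letters in `{a,b}`, inner run exponents in `{a,b}`,
boundary run exponents in `[1, b]`. -/
def Cf1 (a b : ℕ) (u : List ℕ) : Prop :=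
  (∀ c ∈ u, c = a ∨ c = b) ∧
  (∀ p ∈ exps u, p ≤ b) ∧
  (∀ p ∈ ((exps u).drop 1).dropLast, p = a ∨ p = b)

/-- `u` is f-smooth: all iterated finite derivatives are f-derivable
(equivalently, some iterate is `ε`). -/
def FSmooth (a b : ℕ) (u : List ℕ) : Prop := ∀ n, Cf1 a b ((Df a b)^[n] u)

/-- The r-derivative `D_r`: keeps all exponents but cuts the last one. -/
def Dr (a b : ℕ) (u : List ℕ) : List ℕ :=
  match exps u with
  | [] => []
  | p :: rest =>
      (p :: rest).dropLast ++ cut a b ((p :: rest).getLast (List.cons_ne_nil _ _))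

/-- `u` is r-derivable. -/
def Cr1 (a b : ℕ) (u : List ℕ) : Prop :=
  (∀ c ∈ u, c = a ∨ c = b) ∧
  (∀ p ∈ exps u, p ≤ b) ∧
  (∀ p ∈ (exps u).dropLast, p = a ∨ p = b)

/-- `u` is r-smooth. -/
def RSmooth (a b : ℕ) (u : List ℕ) : Prop := ∀ n, Cr1 a b ((Dr a b)^[n] u)

/-- `y` is the derivative of the infinite word `x`: `x = x₀^{y₀} x̄₀^{y₁} x₀^{y₂} ⋯`
with all `y i ∈ {a, b}` (in particular `x` is derivable). -/
def DerivesTo (a b : ℕ) (x y : ℕ → ℕ) : Prop :=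
  (∀ i, y i = a ∨ y i = b) ∧
  ∃ S : ℕ → ℕ, S 0 = 0 ∧ (∀ k, S (k + 1) = S k + y k) ∧
    ∀ k i, S k ≤ i → i < S (k + 1) → x i = (flip a b)^[k] (x 0)

/-- An infinite word over `{a,b}` is smooth if it is infinitely derivable. -/
def Smooth (a b : ℕ) (x : ℕ → ℕ) : Prop :=
  (∀ i, x i = a ∨ x i = b) ∧
  ∃ X : ℕ → ℕ → ℕ, X 0 = x ∧ ∀ n, DerivesTo a b (X n) (X (n + 1))

/-- Auxiliary for the f-primitives: alternate blocks with given exponents,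
ending with a block of exponent `a`. -/
def pfAux (a b : ℕ) : ℕ → List ℕ → List ℕ
  | c, [] => List.replicate a c
  | c, p :: t => List.replicate p c ++ pfAux a b (flip a b c) t

/-- The f-primitive `P_{f,c}`. -/
def Pf (a b c : ℕ) (u : List ℕ) : List ℕ :=
  if c = a then List.replicate a a ++ pfAux a b b u
  else (List.replicate a a ++ pfAux a b b u).map (flip a b)

/-- `u` is a bispecial f-smooth word. -/
def Bispecial (a b : ℕ) (u : List ℕ) : Prop :=
  FSmooth a b u ∧ FSmooth a b (a :: u) ∧ FSmooth a b (b :: u) ∧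
    FSmooth a b (u ++ [a]) ∧ FSmooth a b (u ++ [b])

open Classical in
/-- The multiplicity `m(u) = |{aua,aub,bua,bub} ∩ C_f^∞| - 3`. -/
noncomputable def mult (a b : ℕ) (u : List ℕ) : ℤ :=
  (if FSmooth a b (a :: u ++ [a]) then 1 else 0) +
  (if FSmooth a b (a :: u ++ [b]) then 1 else 0) +
  (if FSmooth a b (b :: u ++ [a]) then 1 else 0) +
  (if FSmooth a b (b :: u ++ [b]) then 1 else 0) - 3

/-- The vertex of the tree `T` indexed by the path `s` from the root `ε`
(`false` = child by `P_{f,a}`, `true` = child by `P_{f,b}`). -/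
def node (a b : ℕ) : List Bool → List ℕ
  | [] => []
  | c :: s => Pf a b (if c then b else a) (node a b s)

/-- Total length `f(i) = ∑_{u ∈ T_i} |u|` of generation `i` of `T`. -/
def totalLen (a b i : ℕ) : ℕ :=
  ∑ s : Fin i → Bool, (node a b (List.ofFn s)).length

/-- Generation `i` of the tree `T`, as a finite set of words. -/
def genSet (a b i : ℕ) : Finset (List ℕ) :=
  (Finset.univ : Finset (Fin i → Bool)).image fun s => node a b (List.ofFn s)

/-- `b_i(n) = |T_i ∩ A^n|`. -/
def bfun (a b i n : ℕ) : ℕ := ((genSet a b i).filter fun u => u.length = n).card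

/-- `s_i(n) = ∑_{m<n} b_i(m)`. -/
def sfun (a b i n : ℕ) : ℕ := ∑ m ∈ Finset.range n, bfun a b i m

/-- `p_i(n) = ∑_{m<n} s_i(m)`. -/
def pfun (a b i n : ℕ) : ℕ := ∑ m ∈ Finset.range n, sfun a b i m

/-- `p(n) = ∑_i p_i(n)`. -/
noncomputable def pTot (a b n : ℕ) : ℝ := ∑' i : ℕ, (pfun a b i n : ℝ)

/-- `l_i`, the minimal length of a word of generation `i` of `T`. -/
noncomputable def li (a b i : ℕ) : ℕ :=
  sInf {m | ∃ s : Fin i → Bool, (node a b (List.ofFn s)).length = m}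

/-- `u` is a factor of the infinite word `x`. -/
def FactorOf (u : List ℕ) (x : ℕ → ℕ) : Prop :=
  ∃ i, u = (List.range u.length).map fun j => x (i + j)


section Aux

/-- Alternating block word starting with letter `c`. -/
def blocks (a b : ℕ) : ℕ → List ℕ → List ℕ
  | _, [] => []
  | c, p :: t => List.replicate p c ++ blocks a b (flip a b c) t

variable {a b : ℕ}

lemma flip_mem (c : ℕ) : flip a b c = a ∨ flip a b c = b := by
  unfold flip; split <;> simp

lemma flip_a : flip a b a = b := if_pos rfl

lemma flip_b (hab : a ≠ b) : flip a b b = a := if_neg (Ne.symm hab)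

lemma flip_ne (hab : a ≠ b) {c : ℕ} (hc : c = a ∨ c = b) : flip a b c ≠ c := by
  rcases hc with rfl | rfl
  · rw [flip_a]; exact Ne.symm hab
  · rw [flip_b hab]; exact hab

lemma flip_flip (hab : a ≠ b) {c : ℕ} (hc : c = a ∨ c = b) :
    flip a b (flip a b c) = c := by
  rcases hc with rfl | rfl
  · rw [flip_a, flip_b hab]
  · rw [flip_b hab, flip_a]

lemma runs_cons (c : ℕ) (t : List ℕ) : ∃ k r, runs (c :: t) = (c, k) :: r := by
  rcases h : runs t with _ | ⟨⟨d, k⟩, r⟩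
  · exact ⟨1, [], by simp [runs, h]⟩
  · by_cases hc : c = d
    · subst hc; exact ⟨k + 1, r, by simp [runs, h]⟩
    · exact ⟨1, (d, k) :: r, by simp [runs, h, hc]⟩

lemma runs_replicate_append {p : ℕ} (hp : 1 ≤ p) (c : ℕ) (w : List ℕ)
    (hw : ∀ d, w.head? = some d → d ≠ c) :
    runs (List.replicate p c ++ w) = (c, p) :: runs w := by
  induction p with
  | zero => omega
  | succ p ih =>
    rcases Nat.eq_zero_or_pos p with rfl | hp'
    · rcases w with _ | ⟨e, t⟩
      · rfl
      · have he : e ≠ c := hw e rfl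
        obtain ⟨k, r, hr⟩ := runs_cons e t
        show (match runs (e :: t) with
          | [] => [(c, 1)]
          | (d, k) :: r => if c = d then (c, k + 1) :: r else (c, 1) :: (d, k) :: r) =
            (c, 0 + 1) :: runs (e :: t)
        rw [hr]
        show (if c = e then (c, k + 1) :: r else (c, 1) :: (e, k) :: r) = _
        rw [if_neg (Ne.symm he)]
    · have h1 := ih hp'
      rw [List.replicate_succ, List.cons_append]
      simp [runs, h1]

lemma blocks_head? {p : ℕ} (c : ℕ) (t : List ℕ) (hp : 1 ≤ p) :
    (blocks a b c (p :: t)).head? = some c := by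
  rcases p with _ | p
  · omega
  · simp [blocks, List.replicate_succ]

lemma exps_blocks (hab : a ≠ b) : ∀ (l : List ℕ) (c : ℕ), (c = a ∨ c = b) →
    (∀ p ∈ l, 1 ≤ p) → exps (blocks a b c l) = l := by
  intro l
  induction l with
  | nil => intro c _ _; simp [blocks, exps, runs]
  | cons p t ih =>
    intro c hc hl
    have hp : 1 ≤ p := hl p (by simp)
    have hrun : runs (blocks a b c (p :: t)) =
        (c, p) :: runs (blocks a b (flip a b c) t) := by
      show runs (List.replicate p c ++ blocks a b (flip a b c) t) = _
      apply runs_replicate_append hp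
      intro d hd
      rcases t with _ | ⟨q, t'⟩
      · simp [blocks] at hd
      · rw [blocks_head? _ _ (hl q (by simp))] at hd
        cases hd
        exact flip_ne hab hc
    have := ih (flip a b c) (flip_mem c) (fun x hx => hl x (by simp [hx]))
    unfold exps at this ⊢
    rw [hrun, List.map_cons, this]

lemma mem_blocks : ∀ (l : List ℕ) (c : ℕ), (c = a ∨ c = b) →
    ∀ x ∈ blocks a b c l, x = a ∨ x = b := by
  intro l
  induction l with
  | nil => intro c _ x hx; simp [blocks] at hx
  | cons p t ih =>
    intro c hc x hx
    simp only [blocks, List.mem_append] at hx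
    rcases hx with hx | hx
    · rcases hc with rfl | rfl
      · exact Or.inl (List.eq_of_mem_replicate hx)
      · exact Or.inr (List.eq_of_mem_replicate hx)
    · exact ih (flip a b c) (flip_mem c) x hx

lemma blocks_append_last : ∀ (l : List ℕ) (c q : ℕ),
    blocks a b c (l ++ [q]) =
      blocks a b c l ++ List.replicate q ((flip a b)^[l.length] c) := by
  intro l
  induction l with
  | nil => intro c q; simp [blocks]
  | cons p t ih =>
    intro c q
    show List.replicate p c ++ blocks a b (flip a b c) (t ++ [q]) =
      (List.replicate p c ++ blocks a b (flip a b c) t) ++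
        List.replicate q ((flip a b)^[t.length + 1] c)
    rw [ih, Function.iterate_succ_apply, List.append_assoc]

lemma blocks_succ_cons (c p : ℕ) (t : List ℕ) :
    blocks a b c ((p + 1) :: t) = c :: blocks a b c (p :: t) := by
  simp [blocks, List.replicate_succ]

lemma cons_blocks {e c : ℕ} (he : flip a b e = c) (l : List ℕ) :
    e :: blocks a b c l = blocks a b e (1 :: l) := by
  simp [blocks, he]

lemma Df_of_exps {w : List ℕ} {p q : ℕ} {m : List ℕ}
    (h : exps w = p :: (m ++ [q])) :
    Df a b w = cut a b p ++ m ++ cut a b q := by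
  rcases m with _ | ⟨x, m'⟩
  · simp only [List.nil_append] at h
    unfold Df
    rw [h]
    simp
  · rw [List.cons_append] at h
    unfold Df
    rw [h]
    show cut a b p ++ (x :: (m' ++ [q])).dropLast ++
        cut a b ((x :: (m' ++ [q])).getLast (List.cons_ne_nil _ _)) = _
    have h1 : (x :: (m' ++ [q])).dropLast = x :: m' := by
      show ((x :: m') ++ [q]).dropLast = x :: m'
      rw [List.dropLast_concat]
    have h2 : (x :: (m' ++ [q])).getLast (List.cons_ne_nil _ _) = q :=
      List.getLast_append_singleton (x :: m')
    rw [h1, h2]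

lemma Cf1_of_exps (hab : a ≤ b) {w : List ℕ} {p q : ℕ} {m : List ℕ}
    (hw : ∀ x ∈ w, x = a ∨ x = b)
    (h : exps w = p :: (m ++ [q])) (hp : p ≤ b) (hq : q ≤ b)
    (hm : ∀ x ∈ m, x = a ∨ x = b) : Cf1 a b w := by
  refine ⟨hw, ?_, ?_⟩
  · rw [h]
    intro x hx
    simp at hx
    rcases hx with rfl | hx | rfl
    · exact hp
    · rcases hm x hx with rfl | rfl
      · exact hab
      · exact le_rfl
    · exact hq
  · rw [h]
    simpa [List.dropLast_concat] using hm

lemma FSmooth_iff (w : List ℕ) :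
    FSmooth a b w ↔ Cf1 a b w ∧ FSmooth a b (Df a b w) := by
  constructor
  · intro h
    refine ⟨h 0, fun n => ?_⟩
    have := h (n + 1)
    rwa [Function.iterate_succ_apply] at this
  · rintro ⟨h0, h⟩ n
    cases n with
    | zero => exact h0
    | succ n => rw [Function.iterate_succ_apply]; exact h n

lemma FSmooth_iff_of {w v : List ℕ} (hC : Cf1 a b w) (hD : Df a b w = v) :
    FSmooth a b w ↔ FSmooth a b v := by
  rw [FSmooth_iff, hD, and_iff_right hC]

lemma step (hab : a < b) (ha : 1 ≤ a) {c p q : ℕ} {m : List ℕ}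
    (hc : c = a ∨ c = b) (hm1 : ∀ x ∈ m, x = a ∨ x = b)
    (hp1 : 1 ≤ p) (hq1 : 1 ≤ q) (hp : p ≤ b) (hq : q ≤ b) :
    FSmooth a b (blocks a b c (p :: (m ++ [q]))) ↔
      FSmooth a b (cut a b p ++ m ++ cut a b q) := by
  have hb : 1 ≤ b := le_trans ha hab.le
  have hone : ∀ x ∈ p :: (m ++ [q]), 1 ≤ x := by
    intro x hx
    simp at hx
    rcases hx with rfl | hx | rfl
    · exact hp1
    · rcases hm1 x hx with rfl | rfl <;> omega
    · exact hq1
  have hexps := exps_blocks hab.ne _ c hc hone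
  exact FSmooth_iff_of
    (Cf1_of_exps hab.le (mem_blocks _ c hc) hexps hp hq hm1)
    (Df_of_exps hexps)

lemma pfAux_eq_blocks : ∀ (u : List ℕ) (c : ℕ),
    pfAux a b c u = blocks a b c (u ++ [a]) := by
  intro u
  induction u with
  | nil => intro c; simp [pfAux, blocks]
  | cons p t ih => intro c; simp [pfAux, blocks, ih]

lemma map_flip_blocks : ∀ (l : List ℕ) (c : ℕ),
    (blocks a b c l).map (flip a b) = blocks a b (flip a b c) l := by
  intro l
  induction l with
  | nil => intro c; simp [blocks]
  | cons p t ih => intro c; simp [blocks, ih]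

lemma blocks_a_expand (u : List ℕ) :
    blocks a b a (a :: (u ++ [a])) = List.replicate a a ++ blocks a b b (u ++ [a]) := by
  show List.replicate a a ++ blocks a b (flip a b a) (u ++ [a]) = _
  rw [flip_a]

lemma Pf_eq_blocks (hab : a ≠ b) (u : List ℕ) {c : ℕ} (hc : c = a ∨ c = b) :
    Pf a b c u = blocks a b c (a :: (u ++ [a])) := by
  rcases hc with rfl | rfl
  · rw [Pf, if_pos rfl, pfAux_eq_blocks, blocks_a_expand]
  · rw [Pf, if_neg (Ne.symm hab), pfAux_eq_blocks, ← blocks_a_expand,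
      map_flip_blocks, flip_a]

lemma key (ha : 1 ≤ a) (hab : a < b) (u : List ℕ)
    (hlet : ∀ x ∈ u, x = a ∨ x = b) {c : ℕ} (hc : c = a ∨ c = b) :
    ∃ d, (d = a ∨ d = b) ∧
      (FSmooth a b (Pf a b c u) ↔ FSmooth a b u) ∧
      (FSmooth a b (c :: Pf a b c u) ↔ FSmooth a b (b :: u)) ∧
      (FSmooth a b (flip a b c :: Pf a b c u) ↔ FSmooth a b (a :: u)) ∧
      (FSmooth a b (Pf a b c u ++ [d]) ↔ FSmooth a b (u ++ [b])) ∧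
      (FSmooth a b (Pf a b c u ++ [flip a b d]) ↔ FSmooth a b (u ++ [a])) ∧
      (FSmooth a b (c :: (Pf a b c u ++ [d])) ↔ FSmooth a b (b :: (u ++ [b]))) ∧
      (FSmooth a b (c :: (Pf a b c u ++ [flip a b d])) ↔ FSmooth a b (b :: (u ++ [a]))) ∧
      (FSmooth a b (flip a b c :: (Pf a b c u ++ [d])) ↔ FSmooth a b (a :: (u ++ [b]))) ∧
      (FSmooth a b (flip a b c :: (Pf a b c u ++ [flip a b d])) ↔
        FSmooth a b (a :: (u ++ [a]))) := by
  have hab' : a ≠ b := hab.ne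
  have hcut_a : cut a b a = [] := if_pos le_rfl
  have hcut_1 : cut a b 1 = [] := if_pos ha
  have hcut_s : cut a b (a + 1) = [b] := if_neg (by omega)
  have hma : ∀ x ∈ a :: u, x = a ∨ x = b := by
    intro x hx
    rcases List.mem_cons.1 hx with rfl | hx
    · exact Or.inl rfl
    · exact hlet x hx
  have hmua : ∀ x ∈ u ++ [a], x = a ∨ x = b := by
    intro x hx
    rcases List.mem_append.1 hx with hx | hx
    · exact hlet x hx
    · exact Or.inl (List.mem_singleton.1 hx)
  have hmaua : ∀ x ∈ a :: (u ++ [a]), x = a ∨ x = b := by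
    intro x hx
    rcases List.mem_cons.1 hx with rfl | hx
    · exact Or.inl rfl
    · exact hmua x hx
  have hPf : Pf a b c u = blocks a b c (a :: (u ++ [a])) := Pf_eq_blocks hab' u hc
  set d := (flip a b)^[u.length + 1] c with hdd
  have hd : d = a ∨ d = b := by
    rw [hdd, Function.iterate_succ_apply']; exact flip_mem _
  have hrep : blocks a b c (a :: (u ++ [a])) =
      blocks a b c (a :: u) ++ List.replicate a d := by
    have h := blocks_append_last (a := a) (b := b) (a :: u) c a
    rw [hdd, Function.iterate_succ_apply]
    simpa using h
  have hrep2 : blocks a b c (a :: (u ++ [a + 1])) =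
      blocks a b c (a :: u) ++ List.replicate (a + 1) d := by
    have h := blocks_append_last (a := a) (b := b) (a :: u) c (a + 1)
    rw [hdd, Function.iterate_succ_apply]
    simpa using h
  have h4 : Pf a b c u ++ [d] = blocks a b c (a :: (u ++ [a + 1])) := by
    rw [hPf, hrep, hrep2, List.replicate_succ', List.append_assoc]
  have h5 : Pf a b c u ++ [flip a b d] = blocks a b c (a :: ((u ++ [a]) ++ [1])) := by
    have hfl : (flip a b)^[(a :: (u ++ [a])).length] c = flip a b d := by
      have hl : (a :: (u ++ [a])).length = u.length + 1 + 1 := by simp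
      rw [hl, Function.iterate_succ_apply', hdd]
    have h := blocks_append_last (a := a) (b := b) (a :: (u ++ [a])) c 1
    rw [hfl] at h
    rw [hPf, show a :: ((u ++ [a]) ++ [1]) = (a :: (u ++ [a])) ++ [1] from rfl, h]
    rfl
  have hb : 1 ≤ b := le_trans ha hab.le
  refine ⟨d, hd, ?_, ?_, ?_, ?_, ?_, ?_, ?_, ?_, ?_⟩
  · rw [hPf]
    simpa [hcut_a] using
      step hab ha (c := c) (p := a) (q := a) (m := u) hc hlet ha ha hab.le hab.le
  · rw [hPf, ← blocks_succ_cons]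
    simpa [hcut_a, hcut_s] using
      step hab ha (c := c) (p := a + 1) (q := a) (m := u) hc hlet
        (by omega) ha (by omega) hab.le
  · rw [hPf, cons_blocks (flip_flip hab' hc)]
    simpa [hcut_a, hcut_1] using
      step hab ha (c := flip a b c) (p := 1) (q := a) (m := a :: u)
        (flip_mem c) hma le_rfl ha hb hab.le
  · rw [h4]
    simpa [hcut_a, hcut_s] using
      step hab ha (c := c) (p := a) (q := a + 1) (m := u) hc hlet
        ha (by omega) hab.le (by omega)
  · rw [h5]
    simpa [hcut_a, hcut_1] using
      step hab ha (c := c) (p := a) (q := 1) (m := u ++ [a]) hc hmua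
        ha le_rfl hab.le hb
  · rw [h4, ← blocks_succ_cons]
    simpa [hcut_s] using
      step hab ha (c := c) (p := a + 1) (q := a + 1) (m := u) hc hlet
        (by omega) (by omega) (by omega) (by omega)
  · rw [h5, ← blocks_succ_cons]
    simpa [hcut_s, hcut_1] using
      step hab ha (c := c) (p := a + 1) (q := 1) (m := u ++ [a]) hc hmua
        (by omega) le_rfl (by omega) hb
  · rw [h4, cons_blocks (flip_flip hab' hc)]
    simpa [hcut_1, hcut_s] using
      step hab ha (c := flip a b c) (p := 1) (q := a + 1) (m := a :: u)
        (flip_mem c) hma le_rfl (by omega) hb (by omega)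
  · rw [h5, cons_blocks (flip_flip hab' hc)]
    simpa [hcut_1] using
      step hab ha (c := flip a b c) (p := 1) (q := 1) (m := a :: (u ++ [a]))
        (flip_mem c) hmaua le_rfl le_rfl hb hb


end Aux

theorem stmt7 (a b : ℕ) (ha : 1 ≤ a) (hab : a < b) (u : List ℕ)
    (hbs : Bispecial a b u) :
    Bispecial a b (Pf a b a u) ∧ mult a b (Pf a b a u) = mult a b u ∧
    Bispecial a b (Pf a b b u) ∧ mult a b (Pf a b b u) = mult a b u := by
  have hab' : a ≠ b := hab.ne
  obtain ⟨hu, hau, hbu, hua, hub⟩ := hbs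
  have hlet : ∀ x ∈ u, x = a ∨ x = b := by simpa using (hu 0).1
  have HA : Bispecial a b (Pf a b a u) ∧ mult a b (Pf a b a u) = mult a b u := by
    obtain ⟨d, hd, E1, E2, E3, E4, E5, E6, E7, E8, E9⟩ :=
      key ha hab u hlet (Or.inl rfl)
    rw [flip_a] at E3 E8 E9
    rcases hd with hd | hd
    · rw [hd] at E4 E6 E8
      rw [hd, flip_a] at E5 E7 E9
      refine ⟨⟨E1.mpr hu, E2.mpr hbu, E3.mpr hau, E4.mpr hub, E5.mpr hua⟩, ?_⟩
      unfold mult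
      classical
      simp only [List.cons_append, E6, E7, E8, E9]
      all_goals by_cases h1 : FSmooth a b (a :: (u ++ [a])) <;>
        by_cases h2 : FSmooth a b (a :: (u ++ [b])) <;>
        by_cases h3 : FSmooth a b (b :: (u ++ [a])) <;>
        by_cases h4 : FSmooth a b (b :: (u ++ [b])) <;>
        simp [h1, h2, h3, h4]
    · rw [hd] at E4 E6 E8
      rw [hd, flip_b hab'] at E5 E7 E9
      refine ⟨⟨E1.mpr hu, E2.mpr hbu, E3.mpr hau, E5.mpr hua, E4.mpr hub⟩, ?_⟩
      unfold mult
      classical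
      simp only [List.cons_append, E6, E7, E8, E9]
      all_goals by_cases h1 : FSmooth a b (a :: (u ++ [a])) <;>
        by_cases h2 : FSmooth a b (a :: (u ++ [b])) <;>
        by_cases h3 : FSmooth a b (b :: (u ++ [a])) <;>
        by_cases h4 : FSmooth a b (b :: (u ++ [b])) <;>
        simp [h1, h2, h3, h4]
  have HB : Bispecial a b (Pf a b b u) ∧ mult a b (Pf a b b u) = mult a b u := by
    obtain ⟨d, hd, F1, F2, F3, F4, F5, F6, F7, F8, F9⟩ :=
      key ha hab u hlet (Or.inr rfl)
    rw [flip_b hab'] at F3 F8 F9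
    rcases hd with hd | hd
    · rw [hd] at F4 F6 F8
      rw [hd, flip_a] at F5 F7 F9
      refine ⟨⟨F1.mpr hu, F3.mpr hau, F2.mpr hbu, F4.mpr hub, F5.mpr hua⟩, ?_⟩
      unfold mult
      classical
      simp only [List.cons_append, F6, F7, F8, F9]
      all_goals by_cases h1 : FSmooth a b (a :: (u ++ [a])) <;>
        by_cases h2 : FSmooth a b (a :: (u ++ [b])) <;>
        by_cases h3 : FSmooth a b (b :: (u ++ [a])) <;>
        by_cases h4 : FSmooth a b (b :: (u ++ [b])) <;>
        simp [h1, h2, h3, h4]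
    · rw [hd] at F4 F6 F8
      rw [hd, flip_b hab'] at F5 F7 F9
      refine ⟨⟨F1.mpr hu, F3.mpr hau, F2.mpr hbu, F5.mpr hua, F4.mpr hub⟩, ?_⟩
      unfold mult
      classical
      simp only [List.cons_append, F6, F7, F8, F9]
      all_goals by_cases h1 : FSmooth a b (a :: (u ++ [a])) <;>
        by_cases h2 : FSmooth a b (a :: (u ++ [b])) <;>
        by_cases h3 : FSmooth a b (b :: (u ++ [a])) <;>
        by_cases h4 : FSmooth a b (b :: (u ++ [b])) <;>
        simp [h1, h2, h3, h4]
  exact ⟨HA.1, HA.2, HB.1, HB.2⟩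


end SmoothWords
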